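/- Let K ≥ 4 be a multiple of 4, μ > 0, C > 0, and v ∈ ℝ. With cos_a = cos(2πa/K), sin_a = sin(2πa/K), and Y_a(u) = μ·cos_a + √μ·(u·cos_a + v·sin_a), the function g(u) = 2·sinh(μ + √μ·u) / (C + Σ_{a=−K/4+1}^{K/4} 2·cosh Y_a(u)) is strictly increasing on ℝ. -/

import Mathlib

open Finset

lemma key_ineq (c x y : ℝ) (hc0 : 0 ≤ c) (hc1 : c ≤ 1) :
    c * (Real.sinh x * Real.sinh y) < Real.cosh x * Real.cosh y := by
  have h1 := Real.cosh_pos x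
  have h2 := Real.cosh_pos y
  have h3 := Real.cosh_sq x
  have h4 := Real.cosh_sq y
  nlinarith [mul_pos h1 h2, sq_nonneg (Real.sinh x * Real.sinh y),
    sq_nonneg (Real.sinh x - Real.sinh y), sq_nonneg (Real.sinh x + Real.sinh y),
    mul_nonneg hc0 (sq_nonneg (Real.sinh x * Real.sinh y))]

/-- **Strict monotonicity of the lower-bounding integrand as a function of `u = U₁^R`.**
For `K ≥ 4` a multiple of 4, `μ > 0`, `C > 0` and any `v ∈ ℝ`, with
`Y_a(u) = μ·cos(2πa/K) + √μ·(u·cos(2πa/K) + v·sin(2πa/K))`, the function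
`u ↦ 2 sinh(μ + √μ u) / (C + ∑_{a=−K/4+1}^{K/4} 2 cosh Y_a(u))` is strictly increasing. -/
theorem lb_integrand_strictMono (K : ℕ) (hK : 4 ≤ K) (hK4 : 4 ∣ K)
    (μ : ℝ) (hμ : 0 < μ) (C : ℝ) (hC : 0 < C) (v : ℝ) :
    StrictMono (fun u : ℝ =>
      (2 * Real.sinh (μ + Real.sqrt μ * u)) /
      (C + ∑ a ∈ Finset.Icc (1 - (K : ℤ)/4) ((K : ℤ)/4),
          2 * Real.cosh (μ * Real.cos (2 * Real.pi * a / K)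
              + Real.sqrt μ * (u * Real.cos (2 * Real.pi * a / K)
                  + v * Real.sin (2 * Real.pi * a / K))))) := by
  obtain ⟨m, rfl⟩ := hK4
  have hm : 1 ≤ m := by omega
  have hmZ : ((4 * m : ℕ) : ℤ) / 4 = (m : ℤ) := by push_cast; omega
  rw [hmZ]
  set s := Real.sqrt μ with hsdef
  have hs : 0 < s := Real.sqrt_pos.mpr hμ
  set c : ℤ → ℝ := fun a => Real.cos (2 * Real.pi * a / (4 * m : ℕ)) with hcdef
  set sn : ℤ → ℝ := fun a => Real.sin (2 * Real.pi * a / (4 * m : ℕ)) with hsndef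
  -- cosine bounds
  have hKpos : (0:ℝ) < ((4 * m : ℕ) : ℝ) := by positivity
  have hcos : ∀ a ∈ Icc (1 - (m:ℤ)) (m:ℤ), 0 ≤ c a ∧ c a ≤ 1 := by
    intro a ha
    rw [mem_Icc] at ha
    refine ⟨?_, Real.cos_le_one _⟩
    apply Real.cos_nonneg_of_mem_Icc
    have ha1 : (1 - (m:ℝ)) ≤ (a:ℝ) := by exact_mod_cast ha.1
    have ha2 : (a:ℝ) ≤ (m:ℝ) := by exact_mod_cast ha.2
    have hKr : ((4 * m : ℕ) : ℝ) = 4 * (m:ℝ) := by push_cast; ring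
    constructor
    · rw [le_div_iff₀ hKpos, hKr]
      nlinarith [Real.pi_pos]
    · rw [div_le_div_iff₀ hKpos (by norm_num : (0:ℝ) < 2), hKr]
      nlinarith [Real.pi_pos]
  apply strictMono_of_deriv_pos
  intro x
  -- derivative pieces
  set Y : ℤ → ℝ → ℝ := fun a u => μ * c a + s * (u * c a + v * sn a) with hYdef
  have hYa : ∀ a : ℤ, HasDerivAt (fun u => 2 * Real.cosh (Y a u))
      (2 * (Real.sinh (Y a x) * (s * c a))) x := by
    intro a
    have h1 : HasDerivAt (fun u : ℝ => μ * c a + s * (u * c a + v * sn a)) (s * c a) x := by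
      have := (((hasDerivAt_id x).mul_const (c a)).add_const (v * sn a)).const_mul s
      simpa using this.const_add (μ * c a)
    exact (h1.cosh).const_mul 2
  have hD : HasDerivAt (fun u => C + ∑ a ∈ Icc (1 - (m:ℤ)) (m:ℤ), 2 * Real.cosh (Y a u))
      (∑ a ∈ Icc (1 - (m:ℤ)) (m:ℤ), 2 * (Real.sinh (Y a x) * (s * c a))) x := by
    exact (HasDerivAt.fun_sum (fun a _ => hYa a)).const_add C
  have hN : HasDerivAt (fun u => 2 * Real.sinh (μ + s * u))
      (2 * (Real.cosh (μ + s * x) * s)) x := by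
    have h1 : HasDerivAt (fun u : ℝ => μ + s * u) s x := by
      simpa using ((hasDerivAt_id x).const_mul s).const_add μ
    exact (h1.sinh).const_mul 2
  have hDpos : ∀ u : ℝ, 0 < C + ∑ a ∈ Icc (1 - (m:ℤ)) (m:ℤ), 2 * Real.cosh (Y a u) := by
    intro u
    have : 0 ≤ ∑ a ∈ Icc (1 - (m:ℤ)) (m:ℤ), 2 * Real.cosh (Y a u) :=
      Finset.sum_nonneg fun a _ => by positivity
    linarith
  have hg := hN.fun_div hD (ne_of_gt (hDpos x))
  rw [hg.deriv]
  apply div_pos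
  · -- numerator
    set S := ∑ a ∈ Icc (1 - (m:ℤ)) (m:ℤ), 2 * Real.cosh (Y a x) with hS
    set S' := ∑ a ∈ Icc (1 - (m:ℤ)) (m:ℤ), 2 * (Real.sinh (Y a x) * (s * c a)) with hS'
    have key : 2 * (Real.cosh (μ + s * x) * s) * (C + S) - 2 * Real.sinh (μ + s * x) * S'
        = 2 * s * (Real.cosh (μ + s * x) * C)
          + ∑ a ∈ Icc (1 - (m:ℤ)) (m:ℤ), (4 * s *
            (Real.cosh (μ + s * x) * Real.cosh (Y a x)
              - c a * (Real.sinh (μ + s * x) * Real.sinh (Y a x)))) := by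
      rw [hS, hS', mul_add, Finset.mul_sum, Finset.mul_sum, add_sub_assoc,
        ← Finset.sum_sub_distrib]
      congr 1
      · ring
      · exact Finset.sum_congr rfl fun a _ => by ring
    rw [key]
    have hsum : 0 ≤ ∑ a ∈ Icc (1 - (m:ℤ)) (m:ℤ), (4 * s *
            (Real.cosh (μ + s * x) * Real.cosh (Y a x)
              - c a * (Real.sinh (μ + s * x) * Real.sinh (Y a x)))) := by
      apply Finset.sum_nonneg
      intro a ha
      have h := key_ineq (c a) (μ + s * x) (Y a x) (hcos a ha).1 (hcos a ha).2
      nlinarith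
    have : 0 < 2 * s * (Real.cosh (μ + s * x) * C) := by positivity
    linarith
  · positivity
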